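/- Let a be an A_1-bounded positive integer vector of dimension k > 1 with trace τ and κ = kτ + 1. Then the sequence n ↦ A_n - κ·n is τ-automatic; equivalently, there is a τ-uniform substitution on an alphabet of size at most 2τ - 1 whose fixed point, under a coding, equals the sequence (A_n mod κ)_{n≥1}, and A_n - κn takes at most 2τ - 1 distinct values. -/
import Mathlib
set_option maxHeartbeats 1000000

private lemma stepf {f : ℕ → ℕ} (hf : StrictMonoOn f (Set.Ici 1)) :
    ∀ i i' : ℕ, 1 ≤ i → i ≤ i' → f i + (i' - i) ≤ f i' := by
  intro i i' hi hii
  induction i', hii using Nat.le_induction with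
  | base => simp
  | succ i' hii ih =>
      have h2 : f i' < f (i' + 1) :=
        hf (Set.mem_Ici.mpr (by omega)) (Set.mem_Ici.mpr (by omega)) (by omega)
      omega

private lemma selfle {f : ℕ → ℕ} (hf : StrictMonoOn f (Set.Ici 1)) (h1 : 1 ≤ f 1) :
    ∀ i, 1 ≤ i → i ≤ f i := by
  intro i hi
  have := stepf hf 1 i le_rfl hi
  omega

open Classical in
private lemma Bval {A B : ℕ → ℕ} (hA : StrictMonoOn A (Set.Ici 1))
    (hB : StrictMonoOn B (Set.Ici 1)) (hA1 : 1 ≤ A 1) (hB1 : 1 ≤ B 1)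
    (hcov : ∀ m, 1 ≤ m → ((∃ n, 1 ≤ n ∧ A n = m) ∧ ¬(∃ n, 1 ≤ n ∧ B n = m)) ∨
      (¬(∃ n, 1 ≤ n ∧ A n = m) ∧ (∃ n, 1 ≤ n ∧ B n = m))) :
    ∀ m, 1 ≤ m → ∃ s, B m = m + s ∧ ∀ i, 1 ≤ i → (A i ≤ B m ↔ i ≤ s) := by
  intro m hm
  have hMm : m ≤ B m := by have := stepf hB 1 m le_rfl hm; omega
  have hMpos : 1 ≤ B m := le_trans hm hMm
  set M := B m with hM
  set SA := (Finset.Icc 1 M).filter (fun x => ∃ i, 1 ≤ i ∧ A i = x) with hSA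
  set SB := (Finset.Icc 1 M).filter (fun x => ∃ i, 1 ≤ i ∧ B i = x) with hSB
  have hsum : SA.card + SB.card = M := by
    have h1 : SB = (Finset.Icc 1 M).filter (fun x => ¬ ∃ i, 1 ≤ i ∧ A i = x) := by
      apply Finset.filter_congr
      intro x hx
      have hx1 : 1 ≤ x := (Finset.mem_Icc.mp hx).1
      rcases hcov x hx1 with ⟨h2, h3⟩ | ⟨h2, h3⟩ <;> simp [h2, h3]
    rw [h1, Finset.card_filter_add_card_filter_not, Nat.card_Icc]
    omega
  have hSBcard : SB.card = m := by
    have himg : SB = (Finset.Icc 1 m).image B := by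
      ext x
      simp only [hSB, Finset.mem_filter, Finset.mem_Icc, Finset.mem_image]
      constructor
      · rintro ⟨⟨hx1, hx2⟩, i, hi1, rfl⟩
        refine ⟨i, ⟨hi1, ?_⟩, rfl⟩
        by_contra hc
        have : B m < B i := hB (Set.mem_Ici.mpr hm) (Set.mem_Ici.mpr hi1) (by omega)
        omega
      · rintro ⟨i, ⟨hi1, hi2⟩, rfl⟩
        have h2 : B i + (m - i) ≤ B m := stepf hB i m hi1 hi2
        have h3 : 1 ≤ B i := le_trans hi1 (selfle hB hB1 i hi1)
        exact ⟨⟨h3, by omega⟩, i, hi1, rfl⟩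
    rw [himg, Finset.card_image_of_injOn
      (hB.injOn.mono (fun x hx => Set.mem_Ici.mpr (Finset.mem_Icc.mp hx).1)), Nat.card_Icc]
    omega
  set T := (Finset.Icc 1 M).filter (fun i => A i ≤ M) with hT
  have hSAcard : SA.card = T.card := by
    have himg : SA = T.image A := by
      ext x
      simp only [hSA, hT, Finset.mem_filter, Finset.mem_Icc, Finset.mem_image]
      constructor
      · rintro ⟨⟨hx1, hx2⟩, i, hi1, rfl⟩
        exact ⟨i, ⟨⟨hi1, le_trans (selfle hA hA1 i hi1) hx2⟩, hx2⟩, rfl⟩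
      · rintro ⟨i, ⟨⟨hi1, hi2⟩, hi3⟩, rfl⟩
        exact ⟨⟨le_trans hi1 (selfle hA hA1 i hi1), hi3⟩, i, hi1, rfl⟩
    rw [himg, Finset.card_image_of_injOn
      (hA.injOn.mono (fun x hx => Set.mem_Ici.mpr (Finset.mem_Icc.mp (Finset.mem_filter.mp hx).1).1))]
  refine ⟨SA.card, by omega, ?_⟩
  intro i hi
  constructor
  · intro hAi
    have hsub : Finset.Icc 1 i ⊆ T := by
      intro i' hi'
      have hi'2 := Finset.mem_Icc.mp hi'
      have h4 : A i' + (i - i') ≤ A i := stepf hA i' i hi'2.1 hi'2.2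
      refine Finset.mem_filter.mpr ⟨Finset.mem_Icc.mpr ⟨hi'2.1, ?_⟩, by omega⟩
      have := selfle hA hA1 i' hi'2.1
      omega
    have := Finset.card_le_card hsub
    rw [Nat.card_Icc] at this
    omega
  · intro his
    have hTne : T.Nonempty := by
      rw [← Finset.card_pos, ← hSAcard]; omega
    set i₀ := T.max' hTne with hi₀
    have hi₀mem : i₀ ∈ T := T.max'_mem hTne
    have hi₀mem' := Finset.mem_filter.mp hi₀mem
    have hi₀1 : 1 ≤ i₀ := (Finset.mem_Icc.mp hi₀mem'.1).1
    have hsub : T ⊆ Finset.Icc 1 i₀ := by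
      intro x hx
      have hx' := Finset.mem_filter.mp hx
      exact Finset.mem_Icc.mpr ⟨(Finset.mem_Icc.mp hx'.1).1, T.le_max' x hx⟩
    have hcard : T.card ≤ i₀ := by
      have := Finset.card_le_card hsub
      rw [Nat.card_Icc] at this
      omega
    have hle : i ≤ i₀ := by omega
    have := stepf hA i i₀ hi hle
    have := hi₀mem'.2
    omega

private lemma crit (hA : StrictMonoOn A (Set.Ici 1))
    (hB : StrictMonoOn B (Set.Ici 1)) (hA1 : 1 ≤ A 1) (hB1 : 1 ≤ B 1)
    (hcov : ∀ m, 1 ≤ m → ((∃ n, 1 ≤ n ∧ A n = m) ∧ ¬(∃ n, 1 ≤ n ∧ B n = m)) ∨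
      (¬(∃ n, 1 ≤ n ∧ A n = m) ∧ (∃ n, 1 ≤ n ∧ B n = m))) :
    ∀ m i, 1 ≤ m → 1 ≤ i → (A i ≤ B m ↔ A i < m + i) := by
  intro m i hm hi
  obtain ⟨s, hBm, hchar⟩ := Bval hA hB hA1 hB1 hcov m hm
  constructor
  · intro hAi
    have his : i ≤ s := (hchar i hi).mp hAi
    have hs1 : 1 ≤ s := le_trans hi his
    have hAs : A s ≤ B m := (hchar s hs1).mpr le_rfl
    have hne : A s ≠ B m := by
      intro heq
      have hBpos : 1 ≤ B m := by omega
      rcases hcov (B m) hBpos with ⟨h2, h3⟩ | ⟨h2, h3⟩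
      · exact h3 ⟨m, hm, rfl⟩
      · exact h2 ⟨s, hs1, heq⟩
    have := stepf hA i s hi his
    omega
  · intro hAi
    by_contra hc
    have his : ¬ (i ≤ s) := fun h => hc ((hchar i hi).mpr h)
    have h2 : ¬ (A (s+1) ≤ B m) := by
      intro h3
      have := (hchar (s+1) (by omega)).mp h3
      omega
    have := stepf hA (s+1) i (by omega) (by omega)
    omega

private lemma mainlocal (hA : StrictMonoOn A (Set.Ici 1))
    (hB : StrictMonoOn B (Set.Ici 1)) (hA1 : 1 ≤ A 1) (hB1 : 1 ≤ B 1)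
    (hcov : ∀ m, 1 ≤ m → ((∃ n, 1 ≤ n ∧ A n = m) ∧ ¬(∃ n, 1 ≤ n ∧ B n = m)) ∨
      (¬(∃ n, 1 ≤ n ∧ A n = m) ∧ (∃ n, 1 ≤ n ∧ B n = m)))
    (m q : ℕ) (hm : 1 ≤ m)
    (Hq : ∀ i, 1 ≤ i → i ≤ q → A i < m + i)
    (Hq2 : ∀ i, q + 2 ≤ i → m + i ≤ A i) :
    B m = m + q + (if A (q+1) < m + q + 1 then 1 else 0) := by
  obtain ⟨s, hBm, hchar⟩ := Bval hA hB hA1 hB1 hcov m hm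
  have hcrit := crit hA hB hA1 hB1 hcov m
  split_ifs with hq1
  · have h1 : q + 1 ≤ s := by
      have := (hchar (q+1) (by omega)).mp ((hcrit (q+1) hm (by omega)).mpr (by omega))
      omega
    have h2 : s ≤ q + 1 := by
      by_contra hc
      have hs1 : 1 ≤ s := by omega
      have hAs : A s < m + s := (hcrit s hm hs1).mp ((hchar s hs1).mpr le_rfl)
      have := Hq2 s (by omega)
      omega
    omega
  · have h2 : s ≤ q := by
      by_contra hc
      have := (hcrit (q+1) hm (by omega)).mp ((hchar (q+1) (by omega)).mpr (by omega))
      omega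
    have h1 : q ≤ s := by
      rcases Nat.eq_zero_or_pos q with hq | hq
      · omega
      · have := (hchar q hq).mp ((hcrit q hm hq).mpr (Hq q hq le_rfl))
        omega
    omega


/-- `A` and `B` (indexed from 1) are complementary strictly increasing sequences
of positive integers: every positive integer lies in exactly one of their ranges. -/
def CompPair (A B : ℕ → ℕ) : Prop :=
  StrictMonoOn A (Set.Ici 1) ∧ StrictMonoOn B (Set.Ici 1) ∧
  (∀ n, 1 ≤ n → 1 ≤ A n) ∧ (∀ n, 1 ≤ n → 1 ≤ B n) ∧
  ∀ m, 1 ≤ m →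
    ((∃ n, 1 ≤ n ∧ A n = m) ∧ ¬(∃ n, 1 ≤ n ∧ B n = m)) ∨
    (¬(∃ n, 1 ≤ n ∧ A n = m) ∧ (∃ n, 1 ≤ n ∧ B n = m))

/-- `(A, B)` is the anti-recurrence pair for the positive linear form `a` of dimension `k`:
`A n = Σ_{j=1}^k a_j * B_{(n-1)k+j}` for all `n ≥ 1`. -/
def AntiRec (k : ℕ) (a : Fin k → ℕ) (A B : ℕ → ℕ) : Prop :=
  CompPair A B ∧
  ∀ n, 1 ≤ n → A n = ∑ j : Fin k, a j * B ((n - 1) * k + (j : ℕ) + 1)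

/-- For an A₁-bounded form with trace τ and κ = kτ+1, the difference sequence
A n - κn is τ-automatic: there is a τ-uniform substitution on an alphabet of at most
2τ - 1 letters whose fixed point, under a coding, gives (A n mod κ); moreover
A n - κn takes at most 2τ - 1 distinct values. -/
theorem stmt15 (k : ℕ) (hk : 1 < k) (a : Fin k → ℕ) (ha : ∀ j, 0 < a j)
    (A B : ℕ → ℕ) (h : AntiRec k a A B)
    (hbdd : (∑ j : Fin k, ((j : ℕ) + 1) * a j) ≤ (k - 1) * (∑ j : Fin k, a j) + 2)
    (τ : ℕ) (hτ : τ = ∑ j : Fin k, a j) (κ : ℕ) (hκ : κ = k * τ + 1) :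
    (∃ (S : Finset ℕ) (σ : ℕ → Fin τ → ℕ) (ω : ℕ → ℕ) (c : ℕ → ℕ),
      S.card ≤ 2 * τ - 1 ∧
      (∀ s ∈ S, ∀ j : Fin τ, σ s j ∈ S) ∧
      ω 0 ∈ S ∧
      (∀ n : ℕ, ∀ j : Fin τ, ω (τ * n + (j : ℕ)) = σ (ω n) j) ∧
      (∀ n, 1 ≤ n → A n % κ = c (ω (n - 1)))) ∧
    (Set.range (fun n : ℕ => (A (n + 1) : ℤ) - κ * (n + 1))).Finite ∧
    (Set.range (fun n : ℕ => (A (n + 1) : ℤ) - κ * (n + 1))).ncard ≤ 2 * τ - 1 := by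
  obtain ⟨⟨hAmono, hBmono, hApos, hBpos, hcov⟩, hrec⟩ := h
  have hA1 : 1 ≤ A 1 := hApos 1 le_rfl
  have hB1 : 1 ≤ B 1 := hBpos 1 le_rfl

  -- basic facts
  have hτk : k ≤ τ := by
    rw [hτ]
    calc k = ∑ _j : Fin k, 1 := by simp
    _ ≤ ∑ j : Fin k, a j := Finset.sum_le_sum (fun j _ => ha j)
  have hτ2 : 2 ≤ τ := le_trans hk hτk
  set S₁ := ∑ j : Fin k, ((j : ℕ) + 1) * a j with hS₁
  -- lower bound on S₁
  have hS1l : τ + k ≤ S₁ + 1 := by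
    have h1 : S₁ = τ + ∑ j : Fin k, (j : ℕ) * a j := by
      rw [hS₁, hτ, ← Finset.sum_add_distrib]
      exact Finset.sum_congr rfl (fun j _ => by ring)
    have hkpos : 0 < k := by omega
    have h2 : ((⟨k - 1, by omega⟩ : Fin k) : ℕ) * a ⟨k - 1, by omega⟩ ≤ ∑ j : Fin k, (j : ℕ) * a j :=
      Finset.single_le_sum (f := fun j : Fin k => (j : ℕ) * a j)
        (fun j _ => Nat.zero_le _) (Finset.mem_univ _)
    have h4 : ((⟨k - 1, by omega⟩ : Fin k) : ℕ) = k - 1 := rfl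
    rw [h4] at h2
    have h3 : k - 1 ≤ (k - 1) * a ⟨k - 1, by omega⟩ :=
      Nat.le_mul_of_pos_right _ (ha _)
    omega
  -- B j = j for j ≤ k
  have hBge : ∀ i, 1 ≤ i → i ≤ B i := selfle hBmono hB1
  have hA1S : S₁ ≤ A 1 := by
    rw [hrec 1 le_rfl, hS₁]
    simp only [Nat.sub_self, Nat.zero_mul, Nat.zero_add]
    exact Finset.sum_le_sum (fun j _ => by
      have := hBge ((j : ℕ) + 1) (by omega)
      calc ((j : ℕ) + 1) * a j = a j * ((j:ℕ)+1) := by ring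
      _ ≤ a j * B ((j:ℕ)+1) := Nat.mul_le_mul_left _ this)
  have hAgtk : ∀ i, 1 ≤ i → k < A i := by
    intro i hi
    have := stepf hAmono 1 i le_rfl hi
    omega
  have hBk : ∀ j, 1 ≤ j → j ≤ k → B j = j := by
    intro j
    induction j using Nat.strong_induction_on with
    | _ j IH =>
      intro hj1 hjk
      rcases hcov j hj1 with ⟨⟨i, hi1, hAi⟩, _⟩ | ⟨_, ⟨i, hi1, hBi⟩⟩
      · have := hAgtk i hi1; omega
      · have hij : i ≤ j := by have := hBge i hi1; omega
        rcases Nat.lt_or_ge i j with hlt | hge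
        · have : B i = i := IH i hlt hi1 (by omega)
          omega
        · have heq : i = j := by omega
          subst heq; exact hBi
  have hA1eq : A 1 = S₁ := by
    have h1 : A 1 = ∑ j : Fin k, a j * B ((j : ℕ) + 1) := by
      rw [hrec 1 le_rfl]; simp
    rw [h1, hS₁]
    exact Finset.sum_congr rfl (fun j _ => by
      rw [hBk ((j:ℕ)+1) (by omega) (by omega)]; ring)
  -- gap lemma
  have hgap : ∀ i, 1 ≤ i → A i + k * τ ≤ A (i + 1) := by
    intro i hi
    obtain ⟨i', rfl⟩ : ∃ i', i = i' + 1 := ⟨i - 1, by omega⟩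
    rw [hrec (i' + 1) (by omega), hrec (i' + 1 + 1) (by omega)]
    simp only [Nat.add_sub_cancel]
    have key : ∀ j : Fin k, B (i' * k + (j:ℕ) + 1) + k ≤ B ((i' + 1) * k + (j:ℕ) + 1) := by
      intro j
      have h2 := stepf hBmono (i' * k + (j:ℕ) + 1) ((i' + 1) * k + (j:ℕ) + 1)
        (by omega) (by nlinarith)
      have h3 : (i' + 1) * k = i' * k + k := by ring
      omega
    calc (∑ j : Fin k, a j * B (i' * k + (j:ℕ) + 1)) + k * τ
        = ∑ j : Fin k, a j * (B (i' * k + (j:ℕ) + 1) + k) := by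
          rw [Finset.sum_congr rfl (fun j (_ : j ∈ Finset.univ) => (Nat.mul_add (a j) _ k)),
            Finset.sum_add_distrib, ← Finset.sum_mul, ← hτ]
          ring
      _ ≤ ∑ j : Fin k, a j * B ((i' + 1) * k + (j:ℕ) + 1) :=
          Finset.sum_le_sum (fun j _ => Nat.mul_le_mul_left _ (key j))
  have hgapit : ∀ i i', 1 ≤ i → i ≤ i' → A i + (k * τ) * (i' - i) ≤ A i' := by
    intro i i' hi hii
    induction i', hii using Nat.le_induction with
    | base => simp
    | succ i'' hii ih =>
        have := hgap i'' (by omega)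
        have h4 : (k*τ) * (i'' + 1 - i) = (k*τ) * (i'' - i) + k*τ := by
          rw [show i'' + 1 - i = (i'' - i) + 1 by omega]; ring
        omega
  -- integer layer
  have hkZ1 : (1:ℤ) ≤ (k:ℤ) := by exact_mod_cast (by omega : 1 ≤ k)
  have hτZ2 : (2:ℤ) ≤ (τ:ℤ) := by exact_mod_cast hτ2
  set K : ℤ := (k:ℤ) * (τ:ℤ) with hK
  have hκZ : (κ:ℤ) = (k:ℤ) * (τ:ℤ) + 1 := by rw [hκ]; push_cast; ring
  set lo : ℤ := (S₁:ℤ) - K - (τ:ℤ) with hlo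
  set hi : ℤ := (S₁:ℤ) - K + (τ:ℤ) - 2 with hhi
  have hbdd' : S₁ ≤ (k-1) * τ + 2 := by rw [hτ]; exact hbdd
  have hS1uZ : (S₁:ℤ) ≤ K - (τ:ℤ) + 2 := by
    have h2 : (S₁:ℤ) ≤ ((k-1:ℕ):ℤ) * (τ:ℤ) + 2 := by exact_mod_cast hbdd'
    rw [Nat.cast_sub (by omega), Nat.cast_one] at h2
    calc (S₁:ℤ) ≤ ((k:ℤ) - 1) * (τ:ℤ) + 2 := h2
    _ = K - (τ:ℤ) + 2 := by rw [hK]; ring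
  have hS1lZ : (τ:ℤ) + (k:ℤ) - 1 ≤ (S₁:ℤ) := by
    have : ((τ + k : ℕ):ℤ) ≤ ((S₁ + 1 : ℕ):ℤ) := by exact_mod_cast hS1l
    push_cast at this; linarith
  have hlo1K : (1:ℤ) - K ≤ lo := by rw [hlo]; linarith
  have hhi0 : hi ≤ 0 := by rw [hhi]; linarith
  set d : ℕ → ℤ := fun n => (A n : ℤ) - (κ:ℤ) * (n:ℤ) with hd
  set W : ℤ → ℕ → ℤ := fun e r => ∑ j : Fin k,
    (if e + K < (r:ℤ) * (k:ℤ) + ((j:ℕ):ℤ) + 1 then (a j : ℤ) else 0) with hWdef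
  set G : ℤ → ℕ → ℤ := fun e r => (S₁:ℤ) - K - (r:ℤ) - 1 + W e r with hGdef
  have hτZ : ∑ j : Fin k, (a j : ℤ) = (τ:ℤ) := by rw [hτ]; push_cast; rfl
  have hd1 : d 1 = (S₁:ℤ) - K - 1 := by
    simp only [hd, hA1eq, hκZ, hK]; push_cast; ring
  have hGbound : ∀ e r, r < τ → lo ≤ e → e ≤ hi → lo ≤ G e r ∧ G e r ≤ hi := by
    intro e r hr hle hue
    have hW0 : 0 ≤ W e r := by
      simp only [hWdef]
      exact Finset.sum_nonneg (fun j _ => by split_ifs; exacts [Int.natCast_nonneg _, le_rfl])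
    have hWτ : W e r ≤ (τ:ℤ) := by
      simp only [hWdef]
      calc ∑ j : Fin k, (if e + K < (r:ℤ) * (k:ℤ) + ((j:ℕ):ℤ) + 1 then (a j : ℤ) else 0)
          ≤ ∑ j : Fin k, (a j : ℤ) :=
            Finset.sum_le_sum (fun j _ => by split_ifs; exacts [le_rfl, Int.natCast_nonneg _])
        _ = (τ:ℤ) := hτZ
    have hrZ : (r:ℤ) < (τ:ℤ) := by exact_mod_cast hr
    constructor
    · simp only [hGdef, hlo]; linarith
    · rcases Nat.eq_zero_or_pos r with rfl | hr1
      · have hWle' : W e 0 ≤ (τ:ℤ) - (a ⟨0, by omega⟩ : ℤ) := by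
          have h5 : W e 0 ≤ ∑ j : Fin k, (if j = (⟨0, by omega⟩ : Fin k) then (0:ℤ) else (a j:ℤ)) := by
            simp only [hWdef]
            apply Finset.sum_le_sum
            intro j _
            by_cases hj : j = (⟨0, by omega⟩ : Fin k)
            · rw [if_pos hj, if_neg]
              rw [hj]
              have hj0 : (((⟨0, by omega⟩ : Fin k) : ℕ):ℤ) = 0 := by norm_num
              rw [hj0]
              push_cast
              intro hcon
              rw [hlo] at hle
              linarith
            · rw [if_neg hj]
              split_ifs; exacts [le_rfl, Int.natCast_nonneg _]
          have h7 : ∀ j : Fin k, (if j = (⟨0, by omega⟩ : Fin k) then (0:ℤ) else (a j:ℤ))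
              = (a j : ℤ) - (if j = (⟨0, by omega⟩ : Fin k) then (a j:ℤ) else 0) := by
            intro j; split_ifs <;> ring
          rw [Finset.sum_congr rfl (fun j _ => h7 j), Finset.sum_sub_distrib, hτZ,
            Finset.sum_ite_eq' Finset.univ _ (fun j => (a j:ℤ))] at h5
          simpa using h5
        have ha0 : (1:ℤ) ≤ (a ⟨0, by omega⟩ : ℤ) := by exact_mod_cast ha _
        simp only [hGdef, hhi]
        push_cast
        linarith
      · have hr1Z : (1:ℤ) ≤ (r:ℤ) := by exact_mod_cast hr1
        simp only [hGdef, hhi]; linarith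
  have MAIN : ∀ n, 1 ≤ n → (lo ≤ d n ∧ d n ≤ hi) ∧
      d n = G (d ((n-1)/τ + 1)) ((n-1) % τ) := by
    intro n
    induction n using Nat.strong_induction_on with
    | _ n IH =>
    intro hn
    rcases Nat.eq_or_lt_of_le hn with h1 | hn2
    · subst h1
      have hWzero : W (d 1) 0 = 0 := by
        simp only [hWdef]
        apply Finset.sum_eq_zero
        intro j _
        rw [if_neg]
        rw [hd1]
        have hjZ : ((j:ℕ):ℤ) < (k:ℤ) := by exact_mod_cast j.isLt
        push_cast
        intro hcon
        linarith
      have hrec1 : d 1 = G (d 1) 0 := by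
        simp only [hGdef]
        rw [hWzero, hd1]
        push_cast; ring
      have e0 : (1-1)/τ = 0 := by simp
      have e1 : (1-1) % τ = 0 := by simp
      rw [e0, e1]
      refine ⟨⟨?_, ?_⟩, by rw [Nat.zero_add]; exact hrec1⟩
      · rw [hd1, hlo]; linarith
      · rw [hd1, hhi]; linarith
    · -- n ≥ 2
      set q := (n-1)/τ with hq
      set r := (n-1) % τ with hr
      have hqr : τ * q + r = n - 1 := Nat.div_add_mod (n-1) τ
      have hrτ : r < τ := Nat.mod_lt _ (by omega)
      have h2q : 2 * q ≤ τ * q := Nat.mul_le_mul_right q hτ2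
      have hq1n : q + 1 ≤ n - 1 := by omega
      obtain ⟨⟨hloq, hhiq⟩, -⟩ := IH (q+1) (by omega) (by omega)
      have hm1 : (n-1)*k = τ*q*k + r*k := by rw [← hqr]; ring
      have hrk : r*k + k ≤ τ*k := by
        have h8 : (r+1)*k ≤ τ*k := Nat.mul_le_mul_right k (by omega)
        have h9 : (r+1)*k = r*k + k := by ring
        omega
      have hmain : ∀ j : Fin k, B ((n-1)*k + (j:ℕ) + 1)
          = (n-1)*k + (j:ℕ) + 1 + q + (if A (q+1) < (n-1)*k + (j:ℕ) + 1 + q + 1 then 1 else 0) := by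
        intro j
        apply mainlocal hAmono hBmono hA1 hB1 hcov _ q (by omega)
        · -- Hq
          intro i hi1 hiq
          obtain ⟨⟨-, hdile⟩, -⟩ := IH i (by omega) hi1
          have hdile0 : d i ≤ 0 := le_trans hdile hhi0
          have hAiZ : (A i:ℤ) ≤ (κ:ℤ) * (i:ℤ) := by simp only [hd] at hdile0; linarith
          have hAi' : A i ≤ κ * i := by exact_mod_cast hAiZ
          have hkti : k*τ*i ≤ k*τ*q := Nat.mul_le_mul_left _ hiq
          have hκi : κ * i = k*τ*i + i := by rw [hκ]; ring
          have he1 : k*τ*q = τ*q*k := by ring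
          omega
        · -- Hq2
          intro i hi2
          have hgi := hgapit (q+1) i (by omega) (by omega)
          have hAq1 : k*τ*q + q + 2 ≤ A (q+1) := by
            have h3 : (1:ℤ) - K ≤ d (q+1) := le_trans hlo1K hloq
            simp only [hd] at h3
            have h4 : ((k*τ*q + q + 2 : ℕ):ℤ) ≤ (A (q+1):ℤ) := by
              rw [hκZ] at h3; rw [hK] at h3
              push_cast
              push_cast at h3
              have hb : ((k:ℤ)*(τ:ℤ) + 1)*((q:ℤ)+1) = (k:ℤ)*(τ:ℤ)*(q:ℤ) + (k:ℤ)*(τ:ℤ) + (q:ℤ) + 1 := by ring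
              linarith [hb]
            exact_mod_cast h4
          have hie : i = q + 2 + (i - q - 2) := by omega
          have hKe : (i - q - 2) ≤ k*τ*(i - q - 2) :=
            Nat.le_mul_of_pos_left _ (Nat.mul_pos (by omega) (by omega))
          have hKe1 : k*τ*(i - (q+1)) = k*τ*(i - q - 2) + k*τ := by
            rw [show i - (q+1) = (i - q - 2) + 1 by omega]; ring
          have he1 : k*τ*q = τ*q*k := by ring
          have he2 : τ*k = k*τ := by ring
          have hjk := j.isLt
          omega
      have hcond : ∀ j : Fin k, (A (q+1) < (n-1)*k + (j:ℕ) + 1 + q + 1)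
          ↔ (d (q+1) + K < (r:ℤ)*(k:ℤ) + ((j:ℕ):ℤ) + 1) := by
        intro j
        have hdq : (A (q+1):ℤ) = (κ:ℤ)*((q:ℤ)+1) + d (q+1) := by
          simp only [hd]; push_cast; ring
        have hmZ : (((n-1)*k : ℕ):ℤ) = (τ:ℤ)*(q:ℤ)*(k:ℤ) + (r:ℤ)*(k:ℤ) := by
          rw [hm1]; push_cast; ring
        constructor
        · intro hlt
          have hltZ : (A (q+1):ℤ) < (((n-1)*k:ℕ):ℤ) + ((j:ℕ):ℤ) + 1 + (q:ℤ) + 1 := by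
            exact_mod_cast hlt
          rw [hdq, hκZ, hmZ] at hltZ
          rw [hK]
          have hb : ((k:ℤ)*(τ:ℤ) + 1)*((q:ℤ)+1) = (τ:ℤ)*(q:ℤ)*(k:ℤ) + (k:ℤ)*(τ:ℤ) + (q:ℤ) + 1 := by ring
          linarith [hb]
        · intro hlt
          have hltZ : (A (q+1):ℤ) < (((n-1)*k:ℕ):ℤ) + ((j:ℕ):ℤ) + 1 + (q:ℤ) + 1 := by
            rw [hdq, hκZ, hmZ]
            rw [hK] at hlt
            have hb : ((k:ℤ)*(τ:ℤ) + 1)*((q:ℤ)+1) = (τ:ℤ)*(q:ℤ)*(k:ℤ) + (k:ℤ)*(τ:ℤ) + (q:ℤ) + 1 := by ring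
            linarith [hb]
          exact_mod_cast hltZ
      have hAnZ : (A n : ℤ) = ∑ j : Fin k, (a j : ℤ) * (B ((n-1)*k + (j:ℕ) + 1) : ℤ) := by
        rw [hrec n hn]; push_cast; ring
      have hBZ : ∀ j : Fin k, (B ((n-1)*k + (j:ℕ) + 1) : ℤ)
          = (((n-1)*k:ℕ):ℤ) + ((j:ℕ):ℤ) + 1 + (q:ℤ)
            + (if d (q+1) + K < (r:ℤ)*(k:ℤ) + ((j:ℕ):ℤ) + 1 then 1 else 0) := by
        intro j
        rw [hmain j]
        by_cases hc : A (q+1) < (n-1)*k + (j:ℕ) + 1 + q + 1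
        · rw [if_pos hc, if_pos ((hcond j).mp hc)]; push_cast; ring
        · rw [if_neg hc, if_neg (fun hcc => hc ((hcond j).mpr hcc))]; push_cast; ring
      have hsum : (A n : ℤ) = (τ:ℤ) * ((((n-1)*k:ℕ):ℤ) + (q:ℤ)) + (S₁:ℤ) + W (d (q+1)) r := by
        rw [hAnZ, Finset.sum_congr rfl (fun j _ => by rw [hBZ j])]
        have hexp : ∀ j : Fin k, (a j:ℤ) * ((((n-1)*k:ℕ):ℤ) + ((j:ℕ):ℤ) + 1 + (q:ℤ)
              + (if d (q+1) + K < (r:ℤ)*(k:ℤ) + ((j:ℕ):ℤ) + 1 then 1 else 0))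
            = (a j:ℤ) * ((((n-1)*k:ℕ):ℤ) + (q:ℤ)) + (((j:ℕ):ℤ)+1) * (a j:ℤ)
              + (if d (q+1) + K < (r:ℤ)*(k:ℤ) + ((j:ℕ):ℤ) + 1 then (a j:ℤ) else 0) := by
          intro j; split_ifs <;> ring
        rw [Finset.sum_congr rfl (fun j _ => hexp j), Finset.sum_add_distrib,
          Finset.sum_add_distrib, ← Finset.sum_mul, hτZ]
        have hS1Z : ∑ j : Fin k, (((j:ℕ):ℤ)+1) * (a j:ℤ) = (S₁:ℤ) := by
          rw [hS₁]; push_cast; rfl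
        rw [hS1Z]
      have hrecn : d n = G (d (q+1)) r := by
        have hnZ : (n:ℤ) = (τ:ℤ)*(q:ℤ) + (r:ℤ) + 1 := by
          have h10 : n = τ*q + r + 1 := by omega
          rw [h10]; push_cast; ring
        have hmZ : (((n-1)*k : ℕ):ℤ) = (τ:ℤ)*(q:ℤ)*(k:ℤ) + (r:ℤ)*(k:ℤ) := by
          rw [hm1]; push_cast; ring
        have hGval : G (d (q+1)) r = (S₁:ℤ) - K - (r:ℤ) - 1 + W (d (q+1)) r := rfl
        have hdn : d n = (A n:ℤ) - (κ:ℤ)*(n:ℤ) := rfl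
        rw [hGval, hdn, hsum, hmZ, hκZ, hnZ, hK]
        ring
      exact ⟨⟨hrecn ▸ (hGbound (d (q+1)) r hrτ hloq hhiq).1,
        hrecn ▸ (hGbound (d (q+1)) r hrτ hloq hhiq).2⟩, hrecn⟩
  -- final assembly
  have hhilo : hi = lo + 2*(τ:ℤ) - 2 := by rw [hhi, hlo]; ring
  have hdb1 := (MAIN 1 le_rfl).1
  have hfd : ∀ n : ℕ, (A (n+1) : ℤ) - (κ:ℤ) * ((n:ℤ)+1) = d (n+1) := by
    intro n; simp only [hd]; push_cast; ring
  have hsub : Set.range (fun n : ℕ => (A (n + 1) : ℤ) - κ * (n + 1)) ⊆ Set.Icc lo hi := by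
    rintro x ⟨n, rfl⟩
    have hb := (MAIN (n+1) (by omega)).1
    simp only
    rw [hfd n]
    exact ⟨hb.1, hb.2⟩
  refine ⟨⟨Finset.range (2*τ - 1), fun s j => (G ((s:ℤ) + lo) ((j:ℕ)) - lo).toNat,
    fun m => (d (m+1) - lo).toNat, fun s => (((s:ℤ) + lo) % (κ:ℤ)).toNat,
    by simp, ?_, ?_, ?_, ?_⟩, ?_, ?_⟩
  · -- closure
    intro s hs j
    beta_reduce
    rw [Finset.mem_range] at hs ⊢
    have hs0 : (0:ℤ) ≤ (s:ℤ) := Int.natCast_nonneg s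
    have h1 : lo ≤ (s:ℤ) + lo := by linarith
    have h2 : (s:ℤ) + lo ≤ hi := by omega
    obtain ⟨g1, g2⟩ := hGbound ((s:ℤ) + lo) (j:ℕ) j.isLt h1 h2
    omega
  · -- ω 0 ∈ S
    beta_reduce
    rw [Nat.zero_add, Finset.mem_range]
    have h1 := hdb1.1
    have h2 := hdb1.2
    omega
  · -- substitution identity
    intro n j
    have hb := (MAIN (n+1) (by omega)).1
    have ht : (((d (n+1) - lo).toNat):ℤ) + lo = d (n+1) := by
      have := hb.1; omega
    have hm := (MAIN (τ*n + (j:ℕ) + 1) (by omega)).2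
    have hdiv : (τ*n + (j:ℕ) + 1 - 1)/τ = n := by
      rw [Nat.add_sub_cancel, Nat.mul_add_div (by omega : 0 < τ),
        Nat.div_eq_of_lt j.isLt, Nat.add_zero]
    have hmod : (τ*n + (j:ℕ) + 1 - 1) % τ = (j:ℕ) := by
      rw [Nat.add_sub_cancel, Nat.mul_add_mod, Nat.mod_eq_of_lt j.isLt]
    rw [hdiv, hmod] at hm
    simp only
    rw [hm, ht]
  · -- coding
    intro n hn
    have h11 : n - 1 + 1 = n := by omega
    simp only [h11]
    have hb := (MAIN n hn).1
    have ht : (((d n - lo).toNat):ℤ) + lo = d n := by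
      have := hb.1; omega
    rw [ht]
    have e1 : d n % (κ:ℤ) = (A n:ℤ) % (κ:ℤ) := by
      have hdn : d n = (A n:ℤ) + (κ:ℤ)*(-(n:ℤ)) := by simp only [hd]; ring
      rw [hdn, Int.add_mul_emod_self_left]
    have e2 : (A n:ℤ) % (κ:ℤ) = ((A n % κ : ℕ):ℤ) := by push_cast; ring
    rw [e1, e2]
    omega
  · exact (Set.finite_Icc lo hi).subset hsub
  · calc (Set.range (fun n : ℕ => (A (n + 1) : ℤ) - κ * (n + 1))).ncard
        ≤ (Set.Icc lo hi).ncard := Set.ncard_le_ncard hsub (Set.finite_Icc lo hi)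
    _ ≤ 2 * τ - 1 := by
        rw [← Finset.coe_Icc, Set.ncard_coe_finset, Int.card_Icc]
        omega
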